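/- For nonnegative integers k, m, s with s ≤ k, the sum over i from 0 to s of C(k−i, k−s) · C(k+i, k) · C(k+m−i, m) equals C(k+m−s, m) · C(2k+m+1, s). -/

import Mathlib

open Finset

lemma hockey (c s : ℕ) :
    ∑ t ∈ Finset.range (s + 1), (c + t).choose t = (c + s + 1).choose s := by
  induction s with
  | zero => simp
  | succ n ih =>
    rw [Finset.sum_range_succ, ih]
    have : c + (n + 1) + 1 = (c + n + 1) + 1 := by ring
    have h1 : c + (n + 1) = c + n + 1 := by ring
    rw [this, h1, Nat.choose_succ_succ (c + n + 1) n]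

lemma vand (b c s : ℕ) :
    ∑ j ∈ Finset.range (s + 1), (b + j).choose j * (c + (s - j)).choose (s - j)
      = (b + c + s + 1).choose s := by
  induction b generalizing s with
  | zero =>
    have := Finset.sum_range_reflect
      (fun j => (0 + j).choose j * (c + (s - j)).choose (s - j)) (s + 1)
    rw [← this]
    simp only [Nat.zero_add, Nat.choose_self, one_mul]
    have h : ∀ j ∈ Finset.range (s + 1),
        (c + (s - (s + 1 - 1 - j))).choose (s - (s + 1 - 1 - j)) = (c + j).choose j := by
      intro j hj
      rw [Finset.mem_range] at hj
      have : s - (s + 1 - 1 - j) = j := by omega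
      rw [this]
    rw [Finset.sum_congr rfl h, hockey]
  | succ b ih =>
    induction s with
    | zero => simp
    | succ n ihs =>
      -- peel off j = 0
      rw [Finset.sum_range_succ']
      simp only [Nat.add_zero, Nat.choose_zero_right, one_mul, Nat.sub_zero]
      -- Pascal on (b+1+(j+1)).choose (j+1)
      have pas : ∀ j, (b + 1 + (j + 1)).choose (j + 1)
          = (b + 1 + j).choose j + (b + 1 + j).choose (j + 1) := by
        intro j
        have : b + 1 + (j + 1) = (b + 1 + j) + 1 := by ring
        rw [this, Nat.choose_succ_succ]
      have step : ∑ j ∈ Finset.range (n + 1),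
          (b + 1 + (j + 1)).choose (j + 1) * (c + (n + 1 - (j + 1))).choose (n + 1 - (j + 1))
          = (∑ j ∈ Finset.range (n + 1), (b + 1 + j).choose j * (c + (n - j)).choose (n - j))
            + (∑ j ∈ Finset.range (n + 1),
              (b + 1 + j).choose (j + 1) * (c + (n - j)).choose (n - j)) := by
        rw [← Finset.sum_add_distrib]
        apply Finset.sum_congr rfl
        intro j hj
        rw [Finset.mem_range] at hj
        have h1 : n + 1 - (j + 1) = n - j := by omega
        rw [h1, pas, Nat.add_mul]
      rw [step, ihs]
      -- second sum is terms j=1..n+1 of S(b, c, n+1)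
      have expand : (b + c + (n + 1) + 1).choose (n + 1)
          = ∑ j ∈ Finset.range (n + 2), (b + j).choose j * (c + (n + 1 - j)).choose (n + 1 - j) :=
        (ih (n + 1)).symm
      have peel : ∑ j ∈ Finset.range (n + 2), (b + j).choose j * (c + (n + 1 - j)).choose (n + 1 - j)
          = (c + (n + 1)).choose (n + 1)
            + ∑ j ∈ Finset.range (n + 1),
                (b + (j + 1)).choose (j + 1) * (c + (n - j)).choose (n - j) := by
        rw [Finset.sum_range_succ']
        simp only [Nat.choose_zero_right, one_mul, Nat.sub_zero, Nat.add_zero]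
        rw [Nat.add_comm]
        congr 1
        apply Finset.sum_congr rfl
        intro j hj
        rw [Finset.mem_range] at hj
        have h1 : n + 1 - (j + 1) = n - j := by omega
        rw [h1]
      have eq2 : ∑ j ∈ Finset.range (n + 1),
            (b + 1 + j).choose (j + 1) * (c + (n - j)).choose (n - j)
          = (b + c + (n + 1) + 1).choose (n + 1) - (c + (n + 1)).choose (n + 1) := by
        rw [expand, peel]
        have : ∀ j, b + 1 + j = b + (j + 1) := by intro j; ring
        simp only [this]
        omega
      rw [eq2]
      have hle : (c + (n + 1)).choose (n + 1) ≤ (b + c + (n + 1) + 1).choose (n + 1) := by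
        apply Nat.choose_le_choose
        omega
      have pas2 : (b + 1 + c + (n + 1) + 1).choose (n + 1)
          = (b + c + (n + 1) + 1).choose n + (b + c + (n + 1) + 1).choose (n + 1) := by
        have : b + 1 + c + (n + 1) + 1 = (b + c + (n + 1) + 1) + 1 := by ring
        rw [this, Nat.choose_succ_succ]
      have h7 : (b + 1 + c + n + 1).choose n = (b + c + (n + 1) + 1).choose n := by
        congr 1
        ring
      omega

theorem sum_choose_three (k m s : ℕ) (hs : s ≤ k) :
    ∑ i ∈ Finset.range (s + 1),
      (k - i).choose (k - s) * (k + i).choose k * (k + m - i).choose m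
      = (k + m - s).choose m * (2 * k + m + 1).choose s := by
  have key : ∀ i ∈ Finset.range (s + 1),
      (k - i).choose (k - s) * (k + i).choose k * (k + m - i).choose m
      = (k + m - s).choose m * ((k + m - i).choose (s - i) * (k + i).choose i) := by
    intro i hi
    rw [Finset.mem_range] at hi
    have hik : i ≤ k := le_trans (by omega) hs
    have h1 : (k - i).choose (k - s) = (k - i).choose (s - i) := by
      rw [← Nat.choose_symm (by omega)]
      congr 1
      omega
    have h2 : (k + m - i).choose m = (k + m - i).choose (k - i) := by
      rw [← Nat.choose_symm (by omega)]
      congr 1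
      omega
    have h3 : (k + i).choose k = (k + i).choose i := by
      rw [← Nat.choose_symm (by omega)]
      congr 1
      omega
    rw [h1, h2, h3]
    have hsub : (k + m - i).choose (k - i) * (k - i).choose (s - i)
        = (k + m - i).choose (s - i) * (k + m - i - (s - i)).choose (k - i - (s - i)) :=
      Nat.choose_mul (by omega)
    have h4 : k + m - i - (s - i) = k + m - s := by omega
    have h5 : k - i - (s - i) = k - s := by omega
    have h6 : (k + m - s).choose (k - s) = (k + m - s).choose m := by
      rw [← Nat.choose_symm (by omega)]
      congr 1
      omega
    rw [h4, h5, h6] at hsub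
    calc (k - i).choose (s - i) * (k + i).choose i * (k + m - i).choose (k - i)
        = ((k + m - i).choose (k - i) * (k - i).choose (s - i)) * (k + i).choose i := by ring
      _ = ((k + m - i).choose (s - i) * (k + m - s).choose m) * (k + i).choose i := by rw [hsub]
      _ = (k + m - s).choose m * ((k + m - i).choose (s - i) * (k + i).choose i) := by ring
  rw [Finset.sum_congr rfl key, ← Finset.mul_sum]
  congr 1
  -- reindex j = s - i
  have hrefl := Finset.sum_range_reflect
    (fun j => (k + m - s + j).choose j * (k + (s - j)).choose (s - j)) (s + 1)
  have hv : k + m - s + k + s + 1 = 2 * k + m + 1 := by omega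
  rw [← hv, ← vand (k + m - s) k s]
  rw [← hrefl]
  apply Finset.sum_congr rfl
  intro i hi
  rw [Finset.mem_range] at hi
  have h1 : s + 1 - 1 - i = s - i := by omega
  rw [h1]
  have h2 : k + m - s + (s - i) = k + m - i := by omega
  have h3 : s - (s - i) = i := by omega
  rw [h2, h3]
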